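/- Coercivity of the relative energy, essential part, for the ideal gas: Let c_v > 1, d ≥ 1 and 0 < δ < 1. There exists a constant c > 0, depending only on δ, c_v and d, such that for all ρ, ϑ, ρ̃, θ̃ ∈ [δ, 1/δ] and all u, ũ ∈ ℝ^d, E(ρ,ϑ,u | ρ̃,θ̃,ũ) ≥ c(|ρ − ρ̃|² + |ϑ − θ̃|² + |u − ũ|²), where E is the relative energy built from the ideal gas constitutive relations. -/

import Mathlib

set_option maxHeartbeats 1000000

open Real Set

/-- Key scalar inequality: for `0 < x ≤ M`, `1 ≤ M`,
`(x-1)²/2 ≤ M(x - 1 - log x)`. -/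
lemma gasKey (M x : ℝ) (hM : 1 ≤ M) (hx : 0 < x) (hxM : x ≤ M) :
    (x - 1) ^ 2 / 2 ≤ M * (x - 1 - Real.log x) := by
  set f : ℝ → ℝ := fun t => M * (t - 1 - Real.log t) - (t - 1) ^ 2 / 2 with hf
  have hderiv : ∀ t : ℝ, 0 < t → HasDerivAt f (M * (1 - t⁻¹) - (t - 1)) t := by
    intro t ht
    have h1 : HasDerivAt (fun s : ℝ => s - 1 - Real.log s) (1 - t⁻¹) t := by
      exact ((hasDerivAt_id t).sub_const 1).sub (Real.hasDerivAt_log ht.ne')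
    have h2 : HasDerivAt (fun s : ℝ => (s - 1) ^ 2 / 2) (t - 1) t := by
      have := (((hasDerivAt_id t).sub_const 1).pow 2).div_const 2
      exact this.congr_deriv (by
        rw [show (2:ℕ) - 1 = 1 from rfl]; simp only [id, pow_one, mul_one, Nat.cast_ofNat]; ring)
    exact (h1.const_mul M).sub h2
  have hf1 : f 1 = 0 := by simp [hf]
  rcases le_total x 1 with hx1 | hx1
  · have hanti : AntitoneOn f (Icc x 1) := by
      apply antitoneOn_of_deriv_nonpos (convex_Icc x 1)
      · exact fun t ht => ((hderiv t (lt_of_lt_of_le hx ht.1)).continuousAt).continuousWithinAt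
      · intro t ht
        rw [interior_Icc] at ht
        exact (hderiv t (hx.trans ht.1)).differentiableAt.differentiableWithinAt
      · intro t ht
        rw [interior_Icc] at ht
        have ht0 : 0 < t := hx.trans ht.1
        rw [(hderiv t ht0).deriv]
        have hti : t * t⁻¹ = 1 := mul_inv_cancel₀ ht0.ne'
        have hinv : 1 ≤ t⁻¹ := by
          nlinarith [hti, mul_nonneg (inv_pos.2 ht0).le (sub_pos.2 ht.2).le]
        nlinarith [mul_nonneg (sub_nonneg.2 hM) (sub_nonneg.2 hinv), sq_nonneg (t - 1),
          hti, ht0, mul_pos ht0 (inv_pos.2 ht0)]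
    have := hanti (left_mem_Icc.2 hx1) (right_mem_Icc.2 hx1) hx1
    rw [hf1] at this
    simpa [hf] using this
  · have hmono : MonotoneOn f (Icc 1 M) := by
      apply monotoneOn_of_deriv_nonneg (convex_Icc 1 M)
      · exact fun t ht => ((hderiv t (lt_of_lt_of_le one_pos ht.1)).continuousAt).continuousWithinAt
      · intro t ht
        rw [interior_Icc] at ht
        exact (hderiv t (lt_trans one_pos ht.1)).differentiableAt.differentiableWithinAt
      · intro t ht
        rw [interior_Icc] at ht
        have ht0 : 0 < t := lt_trans one_pos ht.1
        rw [(hderiv t ht0).deriv]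
        have hti : t * t⁻¹ = 1 := mul_inv_cancel₀ ht0.ne'
        nlinarith [hti, mul_le_mul_of_nonneg_right ht.2.le (inv_pos.2 ht0).le,
          sub_nonneg.2 ht.1.le, mul_nonneg (sub_nonneg.2 ht.1.le)
            (sub_nonneg.2 (mul_le_mul_of_nonneg_right ht.2.le (inv_pos.2 ht0).le))]
    have := hmono (left_mem_Icc.2 hM) ⟨hx1, hxM⟩ hx1
    rw [hf1] at this
    simpa [hf] using this

/-- Quadratic lower bound for `a(b - a - a(log b - log a))` on the box `[δ, 1/δ]²`. -/
lemma gasKey2 (δ a b : ℝ) (hδ0 : 0 < δ) (hδ1 : δ < 1) (ha : a ∈ Icc δ (1/δ))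
    (hb : b ∈ Icc δ (1/δ)) :
    δ ^ 2 * (b - a) ^ 2 / 2 ≤ a * (b - a - a * (Real.log b - Real.log a)) := by
  have ha0 : 0 < a := lt_of_lt_of_le hδ0 ha.1
  have hb0 : 0 < b := lt_of_lt_of_le hδ0 hb.1
  have hδ2 : (0:ℝ) < δ ^ 2 := by positivity
  have hM : 1 ≤ 1 / δ ^ 2 := by
    rw [le_div_iff₀ hδ2]; nlinarith
  have hxM : b / a ≤ 1 / δ ^ 2 := by
    rw [div_le_div_iff₀ ha0 hδ2]
    have e : (1 / δ) * δ ^ 2 = δ := by field_simp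
    nlinarith [mul_le_mul_of_nonneg_right hb.2 hδ2.le, ha.1]
  have hkey := gasKey (1 / δ ^ 2) (b / a) hM (div_pos hb0 ha0) hxM
  rw [Real.log_div hb0.ne' ha0.ne'] at hkey
  have h := mul_le_mul_of_nonneg_left hkey (show (0:ℝ) ≤ δ ^ 2 * a ^ 2 by positivity)
  have e1 : δ ^ 2 * a ^ 2 * ((b / a - 1) ^ 2 / 2) = δ ^ 2 * (b - a) ^ 2 / 2 := by
    field_simp
  have e2 : δ ^ 2 * a ^ 2 * (1 / δ ^ 2 * (b / a - 1 - (Real.log b - Real.log a)))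
      = a * (b - a - a * (Real.log b - Real.log a)) := by
    field_simp
  linarith [h, e1, e2]

/-- Quadratic lower bound for `b(log b - log a) - (b - a)` on the box `[δ, 1/δ]²`. -/
lemma gasKey3 (δ a b : ℝ) (hδ0 : 0 < δ) (hδ1 : δ < 1) (ha : a ∈ Icc δ (1/δ))
    (hb : b ∈ Icc δ (1/δ)) :
    δ ^ 4 * (b - a) ^ 2 / 2 ≤ b * (Real.log b - Real.log a) - (b - a) := by
  have hb0 : 0 < b := lt_of_lt_of_le hδ0 hb.1
  have hk := gasKey2 δ b a hδ0 hδ1 hb ha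
  set T := b * (Real.log b - Real.log a) - (b - a) with hT
  have hk' : δ ^ 2 * (b - a) ^ 2 / 2 ≤ b * T := by
    rw [hT]; nlinarith [hk]
  have hT0 : 0 ≤ T := by nlinarith [hk', sq_nonneg (b - a), hb0, sq_nonneg δ, mul_pos hδ0 hδ0]
  have hδb : δ * b ≤ 1 := by
    have e : δ * (1 / δ) = 1 := by field_simp
    nlinarith [mul_le_mul_of_nonneg_left hb.2 hδ0.le]
  nlinarith [mul_le_mul_of_nonneg_right hδb hT0, mul_le_mul_of_nonneg_left hk' hδ0.le,
    mul_le_mul_of_nonneg_right (pow_le_pow_of_le_one hδ0.le hδ1.le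
      (show 3 ≤ 4 by norm_num)) (sq_nonneg (b - a)), hδ0, hT0]

/-- Ballistic free energy for the ideal gas `p = ρϑ`, `e = c_vϑ`,
`s = log(ϑ^{c_v}/ρ)`: `H_θ̃(ρ,ϑ) = ρ(c_vϑ − θ̃ log(ϑ^{c_v}/ρ))`. -/
noncomputable def Hgas (cv θt ρ ϑ : ℝ) : ℝ :=
  ρ * (cv * ϑ - θt * Real.log (ϑ ^ cv / ρ))

/-- Relative energy built from the ideal gas constitutive relations. -/
noncomputable def relEgas (cv : ℝ) {d : ℕ} (ρ ϑ : ℝ) (u : EuclideanSpace ℝ (Fin d))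
    (ρt θt : ℝ) (ut : EuclideanSpace ℝ (Fin d)) : ℝ :=
  2⁻¹ * ρ * ‖u - ut‖ ^ 2 + Hgas cv θt ρ ϑ
    - deriv (fun r => Hgas cv θt r θt) ρt * (ρ - ρt) - Hgas cv θt ρt θt

/-- The derivative of `ρ ↦ H_θ̃(ρ, θ̃)`. -/
lemma gasDeriv (cv θt ρt : ℝ) (hθt0 : 0 < θt) (hρt0 : 0 < ρt) :
    deriv (fun r => Hgas cv θt r θt) ρt
      = cv * θt - θt * (cv * Real.log θt) + θt * (Real.log ρt + 1) := by
  have hθc : (0:ℝ) < θt ^ cv := Real.rpow_pos_of_pos hθt0 cv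
  have h1 : HasDerivAt (fun r : ℝ => (cv * θt - θt * Real.log (θt ^ cv)) * r
        + θt * (r * Real.log r))
      ((cv * θt - θt * Real.log (θt ^ cv)) * 1 + θt * (Real.log ρt + 1)) ρt :=
    (((hasDerivAt_id ρt).const_mul _).add
      ((Real.hasDerivAt_mul_log hρt0.ne').const_mul θt))
  have heq : (fun r => Hgas cv θt r θt) =ᶠ[nhds ρt]
      (fun r : ℝ => (cv * θt - θt * Real.log (θt ^ cv)) * r + θt * (r * Real.log r)) := by
    filter_upwards [eventually_gt_nhds hρt0] with r hr
    unfold Hgas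
    rw [Real.log_div hθc.ne' hr.ne']
    ring
  have h2 := h1.congr_of_eventuallyEq heq
  rw [h2.deriv, Real.log_rpow hθt0]
  ring

/-- **Coercivity of the relative energy, essential part, for the ideal gas.**
For `c_v > 1` and `0 < δ < 1` there is `c > 0`, depending only on `δ`, `c_v` and `d`,
such that for all state variables in `[δ, 1/δ]`,
`E(ρ,ϑ,u | ρ̃,θ̃,ũ) ≥ c(|ρ−ρ̃|² + |ϑ−θ̃|² + |u−ũ|²)`. -/
theorem relative_energy_coercive_essential (cv : ℝ) (hcv : 1 < cv)
    (d : ℕ) (hd : 1 ≤ d) (δ : ℝ) (hδ0 : 0 < δ) (hδ1 : δ < 1) :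
    ∃ c : ℝ, 0 < c ∧ ∀ ρ ϑ ρt θt : ℝ,
      ρ ∈ Icc δ (1 / δ) → ϑ ∈ Icc δ (1 / δ) →
      ρt ∈ Icc δ (1 / δ) → θt ∈ Icc δ (1 / δ) →
      ∀ u ut : EuclideanSpace ℝ (Fin d),
        c * (|ρ - ρt| ^ 2 + |ϑ - θt| ^ 2 + ‖u - ut‖ ^ 2)
          ≤ relEgas cv ρ ϑ u ρt θt ut := by
  refine ⟨δ ^ 6 / 2, by positivity, ?_⟩
  intro ρ ϑ ρt θt hρ hϑ hρt hθt u ut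
  have hρ0 : 0 < ρ := lt_of_lt_of_le hδ0 hρ.1
  have hϑ0 : 0 < ϑ := lt_of_lt_of_le hδ0 hϑ.1
  have hρt0 : 0 < ρt := lt_of_lt_of_le hδ0 hρt.1
  have hθt0 : 0 < θt := lt_of_lt_of_le hδ0 hθt.1
  -- temperature part
  have h2A := gasKey2 δ θt ϑ hδ0 hδ1 hθt hϑ
  set A : ℝ := ϑ - θt - θt * (Real.log ϑ - Real.log θt) with hAdef
  have hA0 : 0 ≤ A := by nlinarith [h2A, sq_nonneg (ϑ - θt), hθt0, sq_nonneg δ, mul_pos hδ0 hδ0]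
  have hδθ : δ * θt ≤ 1 := by
    have e : δ * (1 / δ) = 1 := by field_simp
    nlinarith [mul_le_mul_of_nonneg_left hθt.2 hδ0.le]
  have hA3 : δ ^ 3 * (ϑ - θt) ^ 2 / 2 ≤ A := by
    nlinarith [mul_le_mul_of_nonneg_right hδθ hA0, mul_le_mul_of_nonneg_left h2A hδ0.le]
  have hδρcv : δ ≤ ρ * cv := by nlinarith [hρ.1, hδ0]
  have hA' : δ ^ 6 / 2 * (ϑ - θt) ^ 2 ≤ ρ * cv * A := by
    have h4 : δ * (δ ^ 3 * (ϑ - θt) ^ 2 / 2) ≤ δ * A := mul_le_mul_of_nonneg_left hA3 hδ0.le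
    have h5 : δ * A ≤ ρ * cv * A := mul_le_mul_of_nonneg_right hδρcv hA0
    nlinarith [h4, h5, mul_le_mul_of_nonneg_right
      (pow_le_pow_of_le_one hδ0.le hδ1.le (show 4 ≤ 6 by norm_num)) (sq_nonneg (ϑ - θt))]
  -- density part
  have hB4 := gasKey3 δ ρt ρ hδ0 hδ1 hρt hρ
  set B : ℝ := ρ * (Real.log ρ - Real.log ρt) - (ρ - ρt) with hBdef
  have hB0 : 0 ≤ B := le_trans (by positivity) hB4
  have hB' : δ ^ 6 / 2 * (ρ - ρt) ^ 2 ≤ θt * B := by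
    have h5 : δ * B ≤ θt * B := mul_le_mul_of_nonneg_right hθt.1 hB0
    have h4 : δ * (δ ^ 4 * (ρ - ρt) ^ 2 / 2) ≤ δ * B := mul_le_mul_of_nonneg_left hB4 hδ0.le
    nlinarith [h4, h5, mul_le_mul_of_nonneg_right
      (pow_le_pow_of_le_one hδ0.le hδ1.le (show 5 ≤ 6 by norm_num)) (sq_nonneg (ρ - ρt))]
  -- kinetic part
  have hU : δ ^ 6 / 2 * ‖u - ut‖ ^ 2 ≤ 2⁻¹ * ρ * ‖u - ut‖ ^ 2 := by
    have hn : (0:ℝ) ≤ ‖u - ut‖ ^ 2 := by positivity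
    have h6 : δ ^ 6 ≤ ρ :=
      le_trans (pow_le_of_le_one hδ0.le hδ1.le (by norm_num)) hρ.1
    have := mul_le_mul_of_nonneg_right h6 hn
    linarith
  -- assemble
  rw [relEgas, gasDeriv cv θt ρt hθt0 hρt0, sq_abs, sq_abs]
  unfold Hgas
  rw [Real.log_div (Real.rpow_pos_of_pos hϑ0 cv).ne' hρ0.ne', Real.log_rpow hϑ0,
    Real.log_div (Real.rpow_pos_of_pos hθt0 cv).ne' hρt0.ne', Real.log_rpow hθt0]
  rw [hAdef] at hA'
  rw [hBdef] at hB'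
  linarith [hA', hB', hU]
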